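/- (Swap lemma) Let G be a network with duplication forest Γ, and let θ₁ = (v₁,…,v_n) and θ₂ be two duplicate sequences compatible with Γ such that θ₂ is obtained from θ₁ by swapping positions m and m+1 (i.e., v'_m = v_{m+1}, v'_{m+1} = v_m, v'_i = v_i otherwise). Then G_i^{θ₁} = G_i^{θ₂} for every index i ∈ {0,…,n} with i ≠ m. -/

import Mathlib

open scoped Classical

universe u

variable {V : Type u}

/-- The merge (backward) operator `R_v^u(G)`: contract duplicate `v` into anchor `u`.
Vertex `v` becomes isolated (representing its removal from the vertex set). -/
def mergeG (G : SimpleGraph V) (u v : V) : SimpleGraph V where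
  Adj x y := x ≠ y ∧ x ≠ v ∧ y ≠ v ∧
    (G.Adj x y ∨ (x = u ∧ G.Adj v y) ∨ (y = u ∧ G.Adj v x))
  symm := by
    constructor
    rintro x y ⟨h1, h2, h3, h4⟩
    refine ⟨h1.symm, h3, h2, ?_⟩
    rcases h4 with h | ⟨a, b⟩ | ⟨a, b⟩
    · exact Or.inl h.symm
    · exact Or.inr (Or.inr ⟨a, b⟩)
    · exact Or.inr (Or.inl ⟨a, b⟩)
  loopless := by constructor; rintro x ⟨h, _⟩; exact h rfl

/-- δ(v): 1 if the duplicate `v` is adjacent to its anchor `u`. -/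
noncomputable def deltaI (G : SimpleGraph V) (u v : V) : ℕ :=
  if G.Adj u v then 1 else 0

/-- e(v): number of common neighbours of anchor `u` and duplicate `v`. -/
noncomputable def extI [Fintype V] (G : SimpleGraph V) (u v : V) : ℕ :=
  (G.neighborFinset u ∩ G.neighborFinset v).card

/-- ℓ(v): number of vertices (other than `u`, `v`) adjacent to exactly one of `u`, `v`. -/
noncomputable def lossI [Fintype V] (G : SimpleGraph V) (u v : V) : ℕ :=
  (((G.neighborFinset u ∪ G.neighborFinset v) \
      (G.neighborFinset u ∩ G.neighborFinset v)) \ {u, v}).card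

/-- Apply the merge operators backward along a list of (anchor, duplicate) pairs. -/
noncomputable def graphAfter (G : SimpleGraph V) (steps : List (V × V)) : SimpleGraph V :=
  steps.foldl (fun g p => mergeG g p.1 p.2) G

noncomputable def deltaNum : SimpleGraph V → List (V × V) → ℕ
  | _, [] => 0
  | G, s :: rest => deltaI G s.1 s.2 + deltaNum (mergeG G s.1 s.2) rest

noncomputable def extNum [Fintype V] : SimpleGraph V → List (V × V) → ℕ
  | _, [] => 0
  | G, s :: rest => extI G s.1 s.2 + extNum (mergeG G s.1 s.2) rest

noncomputable def lossNum [Fintype V] : SimpleGraph V → List (V × V) → ℕ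
  | _, [] => 0
  | G, s :: rest => lossI G s.1 s.2 + lossNum (mergeG G s.1 s.2) rest

/-- The likelihood of a (backward) history: product of one-step DMC transition
probabilities `p_c^{δ_i} p^{e_i} q^{ℓ_i}` with `q = (1-p)/2`. -/
noncomputable def likelihood [Fintype V] (pc p : ℝ) : SimpleGraph V → List (V × V) → ℝ
  | _, [] => 1
  | G, s :: rest =>
      pc ^ deltaI G s.1 s.2 * p ^ extI G s.1 s.2 * ((1 - p) / 2) ^ lossI G s.1 s.2 *
        likelihood pc p (mergeG G s.1 s.2) rest

/-- Rooted binary trees. -/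
inductive BTree (V : Type u) : Type u
  | leaf : V → BTree V
  | node : BTree V → BTree V → BTree V

def BTree.leaves : BTree V → List V
  | .leaf v => [v]
  | .node l r => l.leaves ++ r.leaves

/-- A duplication forest: a list of rooted binary trees. -/
abbrev Forest (V : Type u) := List (BTree V)

def Forest.leaves (Γ : Forest V) : List V := Γ.flatMap BTree.leaves

/-- Replace the cherry `{u, v}` of a tree by the single leaf `u`. -/
inductive ReplaceCherry : BTree V → V → V → BTree V → Prop
  | base_left (u v : V) : ReplaceCherry (.node (.leaf u) (.leaf v)) u v (.leaf u)
  | base_right (u v : V) : ReplaceCherry (.node (.leaf v) (.leaf u)) u v (.leaf u)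
  | left {l l' r : BTree V} {u v : V} :
      ReplaceCherry l u v l' → ReplaceCherry (.node l r) u v (.node l' r)
  | right {l r r' : BTree V} {u v : V} :
      ReplaceCherry r u v r' → ReplaceCherry (.node l r) u v (.node l r')

/-- One backward step on a duplication forest: replace the cherry `{u,v}` in one tree. -/
inductive ForestStep : Forest V → V → V → Forest V → Prop
  | head {t t' : BTree V} {ts : Forest V} {u v : V} :
      ReplaceCherry t u v t' → ForestStep (t :: ts) u v (t' :: ts)
  | tail {t : BTree V} {ts ts' : Forest V} {u v : V} :
      ForestStep ts u v ts' → ForestStep (t :: ts) u v (t :: ts')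

/-- `FUnfold Γ steps Γ₀`: the (anchor, duplicate) list `steps`, processed backward in time,
is compatible with the duplication forest `Γ` and reduces it to `Γ₀`. -/
inductive FUnfold : Forest V → List (V × V) → Forest V → Prop
  | nil (Γ : Forest V) : FUnfold Γ [] Γ
  | cons {Γ Γ' Γ₀ : Forest V} {u v : V} {steps : List (V × V)} :
      ForestStep Γ u v Γ' → FUnfold Γ' steps Γ₀ → FUnfold Γ ((u, v) :: steps) Γ₀

/-- A forest consisting only of isolated leaves (duplication forest of a seed graph). -/
def IsSeed (Γ : Forest V) : Prop := ∀ t ∈ Γ, ∃ v, t = BTree.leaf v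


lemma mergeG_adj' {G : SimpleGraph V} {u v x y : V} :
    (mergeG G u v).Adj x y ↔ x ≠ y ∧ x ≠ v ∧ y ≠ v ∧
      (G.Adj x y ∨ (x = u ∧ G.Adj v y) ∨ (y = u ∧ G.Adj v x)) := Iff.rfl

lemma double_adj' (G : SimpleGraph V) (u v u' v' x y : V)
    (h1 : v ≠ v') (h2 : u ≠ v') (h3 : u' ≠ v) :
    (mergeG (mergeG G u' v') u v).Adj x y ↔
      (x ≠ y ∧ x ≠ v ∧ y ≠ v ∧ x ≠ v' ∧ y ≠ v' ∧
      (G.Adj x y ∨ (x = u ∧ G.Adj v y) ∨ (y = u ∧ G.Adj v x)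
        ∨ (x = u' ∧ G.Adj v' y) ∨ (y = u' ∧ G.Adj v' x)
        ∨ (x = u ∧ y = u' ∧ G.Adj v v') ∨ (y = u ∧ x = u' ∧ G.Adj v v'))) := by
  simp only [mergeG_adj']
  constructor
  · rintro ⟨hxy, hxv, hyv, H⟩
    rcases H with ⟨-, hxv', hyv', H⟩ | ⟨hxu, hvy, -, hyv', H⟩ | ⟨hyu, hvx, -, hxv', H⟩
    · refine ⟨hxy, hxv, hyv, hxv', hyv', ?_⟩; tauto
    · subst hxu
      refine ⟨hxy, hxv, hyv, h2, hyv', ?_⟩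
      rcases H with h | ⟨h, _⟩ | ⟨hyu', h⟩
      · tauto
      · exact absurd h.symm h3
      · exact Or.inr (Or.inr (Or.inr (Or.inr (Or.inr (Or.inl ⟨rfl, hyu', h.symm⟩)))))
    · subst hyu
      refine ⟨hxy, hxv, hyv, hxv', h2, ?_⟩
      rcases H with h | ⟨h, _⟩ | ⟨hxu', h⟩
      · tauto
      · exact absurd h.symm h3
      · exact Or.inr (Or.inr (Or.inr (Or.inr (Or.inr (Or.inr ⟨rfl, hxu', h.symm⟩)))))
  · rintro ⟨hxy, hxv, hyv, hxv', hyv', H⟩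
    refine ⟨hxy, hxv, hyv, ?_⟩
    rcases H with h | ⟨hxu, h⟩ | ⟨hyu, h⟩ | ⟨hxu', h⟩ | ⟨hyu', h⟩ | ⟨hxu, hyu', h⟩ | ⟨hyu, hxu', h⟩
    · exact Or.inl ⟨hxy, hxv', hyv', Or.inl h⟩
    · exact Or.inr (Or.inl ⟨hxu, h.ne, h1, hyv', Or.inl h⟩)
    · exact Or.inr (Or.inr ⟨hyu, h.ne, h1, hxv', Or.inl h⟩)
    · exact Or.inl ⟨hxy, hxv', hyv', Or.inr (Or.inl ⟨hxu', h⟩)⟩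
    · exact Or.inl ⟨hxy, hxv', hyv', Or.inr (Or.inr ⟨hyu', h⟩)⟩
    · exact Or.inr (Or.inl ⟨hxu, fun e => hyv e.symm, h1, hyv',
        Or.inr (Or.inr ⟨hyu', h.symm⟩)⟩)
    · exact Or.inr (Or.inr ⟨hyu, fun e => hxv e.symm, h1, hxv',
        Or.inr (Or.inr ⟨hxu', h.symm⟩)⟩)

set_option maxHeartbeats 1000000 in
lemma mergeG_comm' (G : SimpleGraph V) (u v u' v' : V)
    (h1 : v ≠ v') (h2 : u ≠ v') (h3 : u' ≠ v) :
    mergeG (mergeG G u' v') u v = mergeG (mergeG G u v) u' v' := by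
  ext x y
  rw [double_adj' G u v u' v' x y h1 h2 h3, double_adj' G u' v' u v x y h1.symm h3 h2]
  have hs := G.adj_comm v v'
  constructor <;> rintro ⟨hxy, n1, n2, n3, n4, H⟩ <;>
    exact ⟨hxy, n3, n4, n1, n2, by tauto⟩

lemma ReplaceCherry.mem_anchor {t t' : BTree V} {u v : V} (h : ReplaceCherry t u v t') :
    u ∈ t.leaves := by
  induction h with
  | base_left u v => simp [BTree.leaves]
  | base_right u v => simp [BTree.leaves]
  | left _ ih => simp [BTree.leaves, ih]
  | right _ ih => simp [BTree.leaves, ih]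

lemma ReplaceCherry.leaves_perm {t t' : BTree V} {u v : V} (h : ReplaceCherry t u v t') :
    t.leaves.Perm (v :: t'.leaves) := by
  induction h with
  | base_left u v => exact List.Perm.swap v u []
  | base_right u v => exact List.Perm.refl _
  | left _ ih => simpa [BTree.leaves] using ih.append_right _
  | right _ ih =>
      exact (List.Perm.append_left _ ih).trans List.perm_middle

lemma forest_leaves_cons (t : BTree V) (ts : Forest V) :
    Forest.leaves (t :: ts) = t.leaves ++ Forest.leaves ts := by
  simp [Forest.leaves]

lemma ForestStep.mem_anchor {Γ Γ' : Forest V} {u v : V} (h : ForestStep Γ u v Γ') :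
    u ∈ Forest.leaves Γ := by
  induction h with
  | head hrc => rw [forest_leaves_cons]; exact List.mem_append.2 (Or.inl hrc.mem_anchor)
  | tail _ ih => rw [forest_leaves_cons]; exact List.mem_append.2 (Or.inr ih)

lemma ForestStep.leaves_perm {Γ Γ' : Forest V} {u v : V} (h : ForestStep Γ u v Γ') :
    (Forest.leaves Γ).Perm (v :: Forest.leaves Γ') := by
  induction h with
  | head hrc =>
      rw [forest_leaves_cons, forest_leaves_cons]
      simpa using hrc.leaves_perm.append_right _
  | tail _ ih =>
      rw [forest_leaves_cons, forest_leaves_cons]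
      exact (List.Perm.append_left _ ih).trans List.perm_middle

lemma FUnfold.append_split {Γ Γ₀ : Forest V} {a rest : List (V × V)}
    (h : FUnfold Γ (a ++ rest) Γ₀) : ∃ Δ, FUnfold Γ a Δ ∧ FUnfold Δ rest Γ₀ := by
  induction a generalizing Γ with
  | nil => exact ⟨Γ, FUnfold.nil Γ, h⟩
  | cons p a ih =>
      obtain ⟨u, v⟩ := p
      cases h with
      | cons hs hrest =>
          obtain ⟨Δ, hΔ1, hΔ2⟩ := ih hrest
          exact ⟨Δ, FUnfold.cons hs hΔ1, hΔ2⟩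

lemma FUnfold.nodup {Γ Γ₀ : Forest V} {steps : List (V × V)}
    (h : FUnfold Γ steps Γ₀) (hnd : (Forest.leaves Γ).Nodup) :
    (Forest.leaves Γ₀).Nodup := by
  induction h with
  | nil => exact hnd
  | cons hs _ ih => exact ih ((List.nodup_cons.1 (hs.leaves_perm.nodup hnd)).2)

lemma take_append_cons2 {α : Type*} (a : List α) (p q : α) (b : List α) (k : ℕ) :
    (a ++ p :: q :: b).take (a.length + 2 + k) = a ++ p :: q :: b.take k := by
  rw [List.take_append, List.take_of_length_le (by omega)]
  congr 1
  have h : a.length + 2 + k - a.length = k + 2 := by omega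
  rw [h]
  simp [List.take_succ_cons]

lemma graphAfter_append (G : SimpleGraph V) (l₁ l₂ : List (V × V)) :
    graphAfter G (l₁ ++ l₂) = graphAfter (graphAfter G l₁) l₂ := by
  simp [graphAfter, List.foldl_append]

/-- swap lemma: if two compatible duplicate sequences differ only by a
swap of the two consecutive duplications at positions `m` and `m+1` (here the steps are
listed backward in time, so the swapped pair sits after the common prefix `a`), then
the graphs of the two histories agree at every index except `m` (i.e. after every
prefix of backward steps of length `≠ a.length + 1`). -/
theorem stmt11 [Fintype V] (G : SimpleGraph V) (Γ : Forest V)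
    (hnd : (Forest.leaves Γ).Nodup) (hall : ∀ x : V, x ∈ Forest.leaves Γ)
    (a b : List (V × V)) (u v u' v' : V) (Γ₁ Γ₂ : Forest V)
    (h₁ : FUnfold Γ (a ++ (u', v') :: (u, v) :: b) Γ₁)
    (h₂ : FUnfold Γ (a ++ (u, v) :: (u', v') :: b) Γ₂) :
    ∀ j : ℕ, j ≠ a.length + 1 →
      graphAfter G ((a ++ (u', v') :: (u, v) :: b).take j) =
        graphAfter G ((a ++ (u, v) :: (u', v') :: b).take j) := by
  obtain ⟨Δ, hΓa, hrest1⟩ := h₁.append_split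
  obtain ⟨Δ2, hΓa2, hrest2⟩ := h₂.append_split
  have hndΔ : (Forest.leaves Δ).Nodup := hΓa.nodup hnd
  have hndΔ2 : (Forest.leaves Δ2).Nodup := hΓa2.nodup hnd
  -- extract the two steps from each branch
  obtain ⟨X, sX, hX⟩ : ∃ X, ForestStep Δ u' v' X ∧ FUnfold X ((u, v) :: b) Γ₁ := by
    cases hrest1 with | cons hs h => exact ⟨_, hs, h⟩
  obtain ⟨Y, sY, -⟩ : ∃ Y, ForestStep X u v Y ∧ FUnfold Y b Γ₁ := by
    cases hX with | cons hs h => exact ⟨_, hs, h⟩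
  obtain ⟨P, sP, hP⟩ : ∃ P, ForestStep Δ2 u v P ∧ FUnfold P ((u', v') :: b) Γ₂ := by
    cases hrest2 with | cons hs h => exact ⟨_, hs, h⟩
  obtain ⟨Q, sQ, -⟩ : ∃ Q, ForestStep P u' v' Q ∧ FUnfold Q b Γ₂ := by
    cases hP with | cons hs h => exact ⟨_, hs, h⟩
  -- distinctness
  have hv'X : v' ∉ Forest.leaves X :=
    (List.nodup_cons.1 (sX.leaves_perm.nodup hndΔ)).1
  have huX : u ∈ Forest.leaves X := sY.mem_anchor
  have hvX : v ∈ Forest.leaves X := sY.leaves_perm.mem_iff.2 List.mem_cons_self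
  have hvP : v ∉ Forest.leaves P :=
    (List.nodup_cons.1 (sP.leaves_perm.nodup hndΔ2)).1
  have hu'P : u' ∈ Forest.leaves P := sQ.mem_anchor
  have h1 : v ≠ v' := fun e => hv'X (e ▸ hvX)
  have h2 : u ≠ v' := fun e => hv'X (e ▸ huX)
  have h3 : u' ≠ v := fun e => hvP (e ▸ hu'P)
  intro j hj
  by_cases hle : j ≤ a.length
  · rw [List.take_append, List.take_append,
      Nat.sub_eq_zero_of_le hle]
    simp
  · obtain ⟨k, rfl⟩ : ∃ k, j = a.length + 2 + k := ⟨j - (a.length + 2), by omega⟩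
    rw [take_append_cons2, take_append_cons2, graphAfter_append, graphAfter_append]
    show graphAfter (graphAfter (graphAfter G a) [(u', v'), (u, v)]) (b.take k) =
      graphAfter (graphAfter (graphAfter G a) [(u, v), (u', v')]) (b.take k)
    have : graphAfter (graphAfter G a) [(u', v'), (u, v)] =
        graphAfter (graphAfter G a) [(u, v), (u', v')] := by
      simp only [graphAfter, List.foldl_cons, List.foldl_nil]
      exact mergeG_comm' _ u v u' v' h1 h2 h3
    rw [this]
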